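/- Let u_b : (2/3, ∞) → ℝ be any function satisfying u_b(r) ∈ (6/5, 4/3) and K(u_b(r); r) = 0 for all r > 2/3. Then u_b(r) → 4/3 as r → (2/3)⁺ (limit from within (2/3,∞)) and u_b(r) → 6/5 as r → ∞. -/
import Mathlib

open Filter Topology

noncomputable section

/-- The cubic `K(u;r)`. -/
def Kc (u r : ℝ) : ℝ := 40*u^3 - (50*r + 169)*u^2 + (160*r + 224)*u - 120*r - 96

lemma key1 (u r : ℝ) (hr : 2/3 < r) (h1 : 6/5 < u) (h2 : u < 4/3)
    (hK : Kc u r = 0) : 4/3 - u ≤ 6/5*(r - 2/3) := by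
  unfold Kc at hK
  have e : 30*(r-2/3)*((5*u-6)*(2-u)) = (4-3*u)*(40*u^2-149*u+132) := by
    linear_combination 3*hK
  nlinarith [mul_nonneg (mul_nonneg (by linarith : (0:ℝ) ≤ 4-3*u) (by linarith : (0:ℝ) ≤ 4/3-u)) (by linarith : (0:ℝ) ≤ 287/3 - 40*u),
    mul_nonneg (by linarith : (0:ℝ) ≤ r - 2/3) (by nlinarith : (0:ℝ) ≤ 8/15 - (5*u-6)*(2-u))]

lemma key2 (u r : ℝ) (hr : 2/3 < r) (h1 : 6/5 < u) (h2 : u < 4/3)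
    (hK : Kc u r = 0) : u - 6/5 ≤ 4/(45*r) := by
  unfold Kc at hK
  have hrpos : (0:ℝ) < 45*r := by linarith
  rw [le_div_iff₀ hrpos]
  have e : 10*r*((5*u-6)*(2-u)) = -(40*u^3-169*u^2+224*u-96) := by
    linear_combination hK
  nlinarith [mul_nonneg (mul_nonneg (by linarith : (0:ℝ) ≤ r) (by linarith : (0:ℝ) ≤ 5*u-6)) (by linarith : (0:ℝ) ≤ (2-u) - 2/3),
    mul_nonneg (by linarith : (0:ℝ) ≤ 4/3 - u) (by nlinarith : (0:ℝ) ≤ -(360*u^2-1041*u+628))]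

theorem stmt2 (ub : ℝ → ℝ)
    (hub : ∀ r : ℝ, 2/3 < r → ub r ∈ Set.Ioo (6/5 : ℝ) (4/3) ∧ Kc (ub r) r = 0) :
    Tendsto ub (nhdsWithin (2/3) (Set.Ioi (2/3))) (nhds (4/3)) ∧
    Tendsto ub atTop (nhds (6/5)) := by
  constructor
  · apply tendsto_of_tendsto_of_tendsto_of_le_of_le'
      (g := fun r => 4/3 - 6/5*(r - 2/3)) (h := fun _ : ℝ => (4:ℝ)/3)
    · have hc : Continuous (fun r : ℝ => 4/3 - 6/5*(r - 2/3)) := by continuity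
      have h0 := (hc.tendsto (2/3)).mono_left
        (nhdsWithin_le_nhds (s := Set.Ioi (2/3 : ℝ)))
      norm_num at h0
      exact h0
    · exact tendsto_const_nhds
    · filter_upwards [self_mem_nhdsWithin] with r hr
      have h := hub r hr
      have := key1 (ub r) r hr h.1.1 h.1.2 h.2
      linarith
    · filter_upwards [self_mem_nhdsWithin] with r hr
      exact (hub r hr).1.2.le
  · apply tendsto_of_tendsto_of_tendsto_of_le_of_le'
      (g := fun _ : ℝ => (6:ℝ)/5) (h := fun r => 6/5 + 4/(45*r))
    · exact tendsto_const_nhds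
    · have h0 : Tendsto (fun r : ℝ => 4/(45*r)) atTop (nhds 0) :=
        Tendsto.div_atTop tendsto_const_nhds
          (Tendsto.const_mul_atTop (by norm_num) tendsto_id)
      simpa using tendsto_const_nhds.add h0
    · filter_upwards [eventually_gt_atTop (2/3 : ℝ)] with r hr
      exact ((hub r hr).1.1).le
    · filter_upwards [eventually_gt_atTop (2/3 : ℝ)] with r hr
      have h := hub r hr
      have := key2 (ub r) r hr h.1.1 h.1.2 h.2
      linarith
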